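/- Let T be a tree with n vertices, X ⊆ V(T), and k a positive integer. The number of partitions of X that arise as projections onto X of partitions of V(T) crossed by at most 2k-2 edges of T is at most (4k|X|)^{2k}. -/

import Mathlib

/-- The set of edges of `G` crossing the partition (setoid) `R`. -/
def crossingEdges {V : Type} (G : SimpleGraph V) (R : Setoid V) : Set (Sym2 V) :=
  {e | e ∈ G.edgeSet ∧ ∃ a b : V, e = s(a, b) ∧ ¬ R.r a b}

open SimpleGraph

variable {V : Type}

lemma reach_deleteEdge_cases {G : SimpleGraph V} {a b x y : V}
    (h : G.Reachable x y) :
    (G.deleteEdges {s(a,b)}).Reachable x y ∨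
    ((G.deleteEdges {s(a,b)}).Reachable x a ∧ (G.deleteEdges {s(a,b)}).Reachable b y) ∨
    ((G.deleteEdges {s(a,b)}).Reachable x b ∧ (G.deleteEdges {s(a,b)}).Reachable a y) := by
  set G' := G.deleteEdges {s(a,b)} with hG'
  obtain ⟨w⟩ := h
  induction w with
  | nil => exact Or.inl (Reachable.refl _)
  | @cons u z y hadj w ih =>
    by_cases he : s(u, z) = s(a, b)
    · rw [Sym2.eq_iff] at he
      rcases he with ⟨rfl, rfl⟩ | ⟨rfl, rfl⟩
      · -- u = a, z = b
        rcases ih with h1 | ⟨h2a, h2b⟩ | ⟨h3a, h3b⟩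
        · exact Or.inr (Or.inl ⟨Reachable.refl _, h1⟩)
        · exact Or.inr (Or.inl ⟨Reachable.refl _, h2b⟩)
        · exact Or.inl (h3b)
      · -- u = b, z = a
        rcases ih with h1 | ⟨h2a, h2b⟩ | ⟨h3a, h3b⟩
        · exact Or.inr (Or.inr ⟨Reachable.refl _, h1⟩)
        · exact Or.inl h2b
        · exact Or.inr (Or.inr ⟨Reachable.refl _, h3b⟩)
    · have hadj' : G'.Adj u z := by
        rw [hG', SimpleGraph.deleteEdges_adj]
        exact ⟨hadj, by simpa using he⟩
      rcases ih with h1 | ⟨h2a, h2b⟩ | ⟨h3a, h3b⟩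
      · exact Or.inl ((hadj'.reachable).trans h1)
      · exact Or.inr (Or.inl ⟨(hadj'.reachable).trans h2a, h2b⟩)
      · exact Or.inr (Or.inr ⟨(hadj'.reachable).trans h3a, h3b⟩)

lemma card_cc_deleteEdge_le [Finite V] (G : SimpleGraph V) (e : Sym2 V) :
    Nat.card (G.deleteEdges {e}).ConnectedComponent
      ≤ Nat.card G.ConnectedComponent + 1 := by
  classical
  induction e with
  | h a b =>
    set G' := G.deleteEdges {s(a,b)} with hG'
    let hom : G' →g G := SimpleGraph.Hom.ofLE (SimpleGraph.deleteEdges_le _)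
    have claim : ∀ c d : G'.ConnectedComponent, c.map hom = d.map hom →
        c = d ∨ (c = G'.connectedComponentMk a ∧ d = G'.connectedComponentMk b) ∨
          (c = G'.connectedComponentMk b ∧ d = G'.connectedComponentMk a) := by
      intro c d
      refine SimpleGraph.ConnectedComponent.ind₂ (fun u v h => ?_) c d
      rw [SimpleGraph.ConnectedComponent.map_mk, SimpleGraph.ConnectedComponent.map_mk,
        SimpleGraph.ConnectedComponent.eq] at h
      rcases reach_deleteEdge_cases (a := a) (b := b) h with h1 | ⟨h2, h3⟩ | ⟨h2, h3⟩
      · exact Or.inl (SimpleGraph.ConnectedComponent.sound h1)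
      · exact Or.inr (Or.inl ⟨SimpleGraph.ConnectedComponent.sound h2,
          SimpleGraph.ConnectedComponent.sound h3.symm⟩)
      · exact Or.inr (Or.inr ⟨SimpleGraph.ConnectedComponent.sound h2,
          SimpleGraph.ConnectedComponent.sound h3.symm⟩)
    let f : G'.ConnectedComponent → G.ConnectedComponent ⊕ Unit := fun c =>
      if c = G'.connectedComponentMk b ∧ G'.connectedComponentMk b ≠ G'.connectedComponentMk a
        then Sum.inr () else Sum.inl (c.map hom)
    have hf : Function.Injective f := by
      intro c d h
      simp only [f] at h
      by_cases hc : c = G'.connectedComponentMk b ∧ G'.connectedComponentMk b ≠ G'.connectedComponentMk a <;>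
        by_cases hd : d = G'.connectedComponentMk b ∧ G'.connectedComponentMk b ≠ G'.connectedComponentMk a
      · exact hc.1.trans hd.1.symm
      · rw [if_pos hc, if_neg hd] at h; exact absurd h (by simp)
      · rw [if_neg hc, if_pos hd] at h; exact absurd h (by simp)
      · rw [if_neg hc, if_neg hd] at h
        simp only [Sum.inl.injEq] at h
        rcases claim c d h with h1 | ⟨h1, h2⟩ | ⟨h1, h2⟩
        · exact h1
        · -- c = mk a, d = mk b; since ¬cond for d, mk b = mk a
          rcases not_and_or.mp hd with h3 | h3
          · exact absurd h2 h3
          · rw [h1, h2, not_not.mp h3]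
        · rcases not_and_or.mp hc with h3 | h3
          · exact absurd h1 h3
          · rw [h1, h2, not_not.mp h3]
    calc Nat.card G'.ConnectedComponent
        ≤ Nat.card (G.ConnectedComponent ⊕ Unit) := Nat.card_le_card_of_injective f hf
      _ = Nat.card G.ConnectedComponent + 1 := by
          rw [Nat.card_sum]; simp

lemma card_cc_deleteEdges_le [Finite V] (G : SimpleGraph V) (hG : G.Connected)
    (S : Set (Sym2 V)) :
    Nat.card (G.deleteEdges S).ConnectedComponent ≤ S.ncard + 1 := by
  have hfin : S.Finite := Set.toFinite S
  refine Set.Finite.induction_on (motive := fun S _ => Nat.card (G.deleteEdges S).ConnectedComponent ≤ S.ncard + 1) S hfin ?_ ?_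
  ·
    rw [SimpleGraph.deleteEdges_empty]
    haveI : Subsingleton G.ConnectedComponent := hG.preconnected.subsingleton_connectedComponent
    haveI : Nonempty V := hG.nonempty
    haveI : Unique G.ConnectedComponent :=
      ⟨⟨G.connectedComponentMk (Classical.arbitrary V)⟩, fun c => Subsingleton.elim _ _⟩
    simp [Nat.card_unique]
  · rintro e S heS hSfin ih
    have h1 : G.deleteEdges (insert e S) = (G.deleteEdges S).deleteEdges {e} := by
      rw [SimpleGraph.deleteEdges_deleteEdges, Set.union_singleton]
    rw [h1]
    calc Nat.card ((G.deleteEdges S).deleteEdges {e}).ConnectedComponent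
        ≤ Nat.card (G.deleteEdges S).ConnectedComponent + 1 :=
          card_cc_deleteEdge_le _ _
      _ ≤ (S.ncard + 1) + 1 := by omega
      _ = (insert e S).ncard + 1 := by rw [Set.ncard_insert_of_notMem heS hSfin]

lemma edge_not_mem_unique_path {T : SimpleGraph V} (hT : T.IsTree) {x y : V}
    {p : T.Walk x y} (hp : p.IsPath) {e : Sym2 V}
    (hreach : (T.deleteEdges {e}).Reachable x y) : e ∉ p.edges := by
  classical
  intro hew
  obtain ⟨q⟩ := hreach
  let qp := q.toPath
  have hsub : ∀ f ∈ qp.val.edges, f ∈ T.edgeSet := by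
    intro f hf
    have := qp.val.edges_subset_edgeSet hf
    rw [SimpleGraph.edgeSet_deleteEdges] at this
    exact this.1
  have htp : (qp.val.transfer T hsub).IsPath := qp.prop.transfer _
  have := hT.IsAcyclic.path_unique ⟨qp.val.transfer T hsub, htp⟩ ⟨p, hp⟩
  have hpe : p.edges = qp.val.edges := by
    have h2 := congrArg (fun r : T.Path x y => r.val.edges) this
    simpa [SimpleGraph.Walk.edges_transfer] using h2.symm
  rw [hpe] at hew
  have := qp.val.edges_subset_edgeSet hew
  rw [SimpleGraph.edgeSet_deleteEdges] at this
  simp at this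

lemma reachable_deleteEdges_of_forall {T : SimpleGraph V} (hT : T.IsTree) (S : Set (Sym2 V))
    {x y : V} (h : ∀ e ∈ S, (T.deleteEdges {e}).Reachable x y) :
    (T.deleteEdges S).Reachable x y := by
  classical
  obtain ⟨r⟩ := hT.isConnected.preconnected x y
  let p := r.toPath
  have hS : ∀ e ∈ p.val.edges, e ∈ (T.deleteEdges S).edgeSet := by
    intro e he
    rw [SimpleGraph.edgeSet_deleteEdges]
    refine ⟨p.val.edges_subset_edgeSet he, fun heS => ?_⟩
    exact edge_not_mem_unique_path hT p.prop (h e heS) he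
  exact ⟨p.val.transfer _ hS⟩

section Laminar
variable {α : Type} [DecidableEq α]

lemma laminar_big_card :
    ∀ (n : ℕ) (𝓕 : Finset (Finset α)) (U : Finset α), 𝓕.card = n →
    (∀ A ∈ 𝓕, A ⊆ U) → (∀ A ∈ 𝓕, 2 ≤ A.card) →
    (∀ A ∈ 𝓕, ∀ B ∈ 𝓕, A ⊆ B ∨ B ⊆ A ∨ Disjoint A B) →
    𝓕.Nonempty → 𝓕.card + 1 ≤ U.card := by
  intro n
  induction n using Nat.strong_induction_on with
  | _ n ih =>
  intro 𝓕 U hcard hsub hbig hlam hne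
  obtain ⟨A, hA, hAmin⟩ := 𝓕.exists_minimal hne
  have hA2 : 2 ≤ A.card := hbig A hA
  obtain ⟨a, ha⟩ : A.Nonempty := Finset.card_pos.mp (by omega)
  have hmin : ∀ B ∈ 𝓕, B ≠ A → A ⊆ B ∨ Disjoint A B := by
    intro B hB hBA
    rcases hlam A hA B hB with h | h | h
    · exact Or.inl h
    · exact absurd (Finset.Subset.antisymm h (hAmin hB h)) hBA
    · exact Or.inr h
  set c : Finset α → Finset α := fun B => if A ⊆ B then (B \ A) ∪ {a} else B with hc
  set 𝓕' : Finset (Finset α) := (𝓕.erase A).image c with h𝓕'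
  set U' : Finset α := (U \ A) ∪ {a} with hU'
  have haA : ∀ B : Finset α, a ∉ B \ A := fun B h => (Finset.mem_sdiff.mp h).2 ha
  have hnotsub : ∀ {D : Finset α}, Disjoint A D → ¬ A ⊆ D :=
    fun hd hs => Finset.disjoint_left.mp hd ha (hs ha)
  have hcinj : Set.InjOn c (𝓕.erase A) := by
    intro B hB C hC hBC
    have hBA := Finset.ne_of_mem_erase hB
    have hCA := Finset.ne_of_mem_erase hC
    have hB𝓕 := Finset.mem_of_mem_erase hB
    have hC𝓕 := Finset.mem_of_mem_erase hC
    rcases hmin B hB𝓕 hBA with hAB | hAB <;> rcases hmin C hC𝓕 hCA with hAC | hAC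
    · rw [hc] at hBC
      simp only [if_pos hAB, if_pos hAC] at hBC
      have h1 : B \ A = C \ A := by
        have := congrArg (fun s => Finset.erase s a) hBC
        simpa [Finset.union_comm, Finset.erase_union_distrib,
          Finset.erase_eq_of_notMem (haA B), Finset.erase_eq_of_notMem (haA C)] using this
      have := congrArg (fun s => s ∪ A) h1
      simpa [Finset.sdiff_union_of_subset hAB, Finset.sdiff_union_of_subset hAC] using this
    · rw [hc] at hBC
      simp only [if_pos hAB, if_neg (hnotsub hAC)] at hBC
      exfalso
      have : a ∈ C := by
        rw [← hBC]; exact Finset.mem_union_right _ (Finset.mem_singleton_self a)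
      exact Finset.disjoint_left.mp hAC ha this
    · rw [hc] at hBC
      simp only [if_neg (hnotsub hAB), if_pos hAC] at hBC
      exfalso
      have : a ∈ B := by
        rw [hBC]; exact Finset.mem_union_right _ (Finset.mem_singleton_self a)
      exact Finset.disjoint_left.mp hAB ha this
    · rw [hc] at hBC
      simpa [if_neg (hnotsub hAB),
        if_neg (hnotsub hAC)] using hBC
  have hcard' : 𝓕'.card = 𝓕.card - 1 := by
    rw [h𝓕', Finset.card_image_of_injOn hcinj, Finset.card_erase_of_mem hA]
  by_cases hne' : 𝓕'.Nonempty
  · -- apply ih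
    have hsub' : ∀ B' ∈ 𝓕', B' ⊆ U' := by
      intro B' hB'
      obtain ⟨B, hB, rfl⟩ := Finset.mem_image.mp hB'
      have hB𝓕 := Finset.mem_of_mem_erase hB
      rcases hmin B hB𝓕 (Finset.ne_of_mem_erase hB) with hAB | hAB
      · rw [hc]; simp only [if_pos hAB]
        exact Finset.union_subset_union (Finset.sdiff_subset_sdiff (hsub B hB𝓕) le_rfl) le_rfl
      · rw [hc]; simp only [if_neg (hnotsub hAB)]
        exact (Finset.subset_sdiff.mpr ⟨hsub B hB𝓕, hAB.symm⟩).trans Finset.subset_union_left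
    have hbig' : ∀ B' ∈ 𝓕', 2 ≤ B'.card := by
      intro B' hB'
      obtain ⟨B, hB, rfl⟩ := Finset.mem_image.mp hB'
      have hB𝓕 := Finset.mem_of_mem_erase hB
      rcases hmin B hB𝓕 (Finset.ne_of_mem_erase hB) with hAB | hAB
      · rw [hc]; simp only [if_pos hAB]
        have hd : Disjoint (B \ A) {a} := Finset.disjoint_singleton_right.mpr (haA B)
        rw [Finset.card_union_of_disjoint hd, Finset.card_sdiff_of_subset hAB, Finset.card_singleton]
        have : A.card < B.card := Finset.card_lt_card
          (Finset.ssubset_iff_subset_ne.mpr ⟨hAB, fun h => Finset.ne_of_mem_erase hB h.symm⟩)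
        omega
      · rw [hc]; simp only [if_neg (hnotsub hAB)]
        exact hbig B hB𝓕
    have hlam' : ∀ B' ∈ 𝓕', ∀ C' ∈ 𝓕', B' ⊆ C' ∨ C' ⊆ B' ∨ Disjoint B' C' := by
      intro B' hB' C' hC'
      obtain ⟨B, hB, rfl⟩ := Finset.mem_image.mp hB'
      obtain ⟨C, hC, rfl⟩ := Finset.mem_image.mp hC'
      have hB𝓕 := Finset.mem_of_mem_erase hB
      have hC𝓕 := Finset.mem_of_mem_erase hC
      have key : ∀ B C : Finset α, B ∈ 𝓕 → C ∈ 𝓕 → B ≠ A → C ≠ A → B ⊆ C →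
          c B ⊆ c C := by
        intro B C hB𝓕 hC𝓕 hBA hCA hBC
        rcases hmin B hB𝓕 hBA with hAB | hAB <;> rcases hmin C hC𝓕 hCA with hAC | hAC
        · rw [hc]; simp only [if_pos hAB, if_pos hAC]
          exact Finset.union_subset_union (Finset.sdiff_subset_sdiff hBC le_rfl) le_rfl
        · exact absurd (hAB.trans hBC) (hnotsub hAC)
        · rw [hc]; simp only [if_neg (hnotsub hAB), if_pos hAC]
          exact (Finset.subset_sdiff.mpr ⟨hBC, hAB.symm⟩).trans Finset.subset_union_left
        · rw [hc]
          simp only [if_neg (hnotsub hAB),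
            if_neg (hnotsub hAC)]
          exact hBC
      rcases hlam B hB𝓕 C hC𝓕 with h | h | h
      · exact Or.inl (key B C hB𝓕 hC𝓕 (Finset.ne_of_mem_erase hB) (Finset.ne_of_mem_erase hC) h)
      · exact Or.inr (Or.inl (key C B hC𝓕 hB𝓕 (Finset.ne_of_mem_erase hC)
          (Finset.ne_of_mem_erase hB) h))
      · refine Or.inr (Or.inr ?_)
        rcases hmin B hB𝓕 (Finset.ne_of_mem_erase hB) with hAB | hAB <;>
          rcases hmin C hC𝓕 (Finset.ne_of_mem_erase hC) with hAC | hAC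
        · exact (Finset.disjoint_left.mp h (hAB ha) (hAC ha)).elim
        · rw [hc]; simp only [if_pos hAB, if_neg (hnotsub hAC)]
          refine Finset.disjoint_union_left.mpr ⟨h.mono_left Finset.sdiff_subset, ?_⟩
          exact Finset.disjoint_singleton_left.mpr (fun hh => Finset.disjoint_left.mp hAC ha hh)
        · rw [hc]; simp only [if_pos hAC, if_neg (hnotsub hAB)]
          refine Finset.disjoint_union_right.mpr ⟨h.mono_right Finset.sdiff_subset, ?_⟩
          exact Finset.disjoint_singleton_right.mpr (fun hh => Finset.disjoint_left.mp hAB ha hh)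
        · rw [hc]
          simp only [if_neg (hnotsub hAB),
            if_neg (hnotsub hAC)]
          exact h
    have hlt : 𝓕'.card < n := by
      have : 1 ≤ 𝓕.card := Finset.card_pos.mpr hne
      omega
    have hih := ih 𝓕'.card hlt 𝓕' U' rfl hsub' hbig' hlam' hne'
    have hU'card : U'.card = U.card - A.card + 1 := by
      rw [hU', Finset.card_union_of_disjoint
        (Finset.disjoint_singleton_right.mpr (haA U)), Finset.card_sdiff_of_subset (hsub A hA),
        Finset.card_singleton]
    have hAU : A.card ≤ U.card := Finset.card_le_card (hsub A hA)
    omega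
  · have h0 : 𝓕'.card = 0 := by
      rwa [Finset.card_eq_zero, ← Finset.not_nonempty_iff_eq_empty]
    have h1 : 1 ≤ 𝓕.card := Finset.card_pos.mpr hne
    have h𝓕1 : 𝓕.card = 1 := by omega
    have hAU : A.card ≤ U.card := Finset.card_le_card (hsub A hA)
    omega

lemma laminar_card_le (𝓕 : Finset (Finset α)) (U : Finset α)
    (hsub : ∀ A ∈ 𝓕, A ⊆ U) (hne : ∀ A ∈ 𝓕, A.Nonempty)
    (hlam : ∀ A ∈ 𝓕, ∀ B ∈ 𝓕, A ⊆ B ∨ B ⊆ A ∨ Disjoint A B) :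
    𝓕.card ≤ 2 * U.card := by
  classical
  have hsplit := Finset.card_filter_add_card_filter_not
    (s := 𝓕) (p := fun A => A.card = 1)
  set 𝓕₁ := 𝓕.filter (fun A => A.card = 1) with h1
  set 𝓕₂ := 𝓕.filter (fun A => ¬ A.card = 1) with h2
  have hc1 : 𝓕₁.card ≤ U.card := by
    have hsub1 : 𝓕₁ ⊆ U.image (fun x => {x}) := by
      intro A hA
      obtain ⟨x, rfl⟩ := Finset.card_eq_one.mp (Finset.mem_filter.mp hA).2
      exact Finset.mem_image.mpr ⟨x, hsub _ (Finset.mem_filter.mp hA).1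
        (Finset.mem_singleton_self x), rfl⟩
    exact (Finset.card_le_card hsub1).trans Finset.card_image_le
  have hc2 : 𝓕₂.card ≤ U.card := by
    by_cases hne2 : 𝓕₂.Nonempty
    · have := laminar_big_card 𝓕₂.card 𝓕₂ U rfl
        (fun A hA => hsub A (Finset.mem_filter.mp hA).1)
        (fun A hA => by
          have h1' := hne A (Finset.mem_filter.mp hA).1
          have h2' := (Finset.mem_filter.mp hA).2
          have := Finset.card_pos.mpr h1'
          omega)
        (fun A hA B hB => hlam A (Finset.mem_filter.mp hA).1 B (Finset.mem_filter.mp hB).1)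
        hne2
      omega
    · rw [Finset.not_nonempty_iff_eq_empty.mp hne2]
      simp
  omega
end Laminar

lemma four_comps {W : Type} [Finite W] {H : SimpleGraph W}
    (hcard : Nat.card H.ConnectedComponent ≤ 3) {r x y z : W}
    (h1 : ¬H.Reachable r x) (h2 : ¬H.Reachable r y) (h3 : ¬H.Reachable r z)
    (h4 : ¬H.Reachable x y) (h5 : ¬H.Reachable x z) (h6 : ¬H.Reachable y z) : False := by
  classical
  have hinj : Function.Injective
      (![H.connectedComponentMk r, H.connectedComponentMk x,
         H.connectedComponentMk y, H.connectedComponentMk z] : Fin 4 → _) := by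
    intro i j hij
    fin_cases i <;> fin_cases j <;>
      first
        | rfl
        | (exfalso; simp only [Matrix.cons_val_zero, Matrix.cons_val_one, Matrix.head_cons,
            Matrix.cons_val_two, Matrix.tail_cons, Matrix.cons_val_three] at hij
           first
             | exact h1 (SimpleGraph.ConnectedComponent.exact hij)
             | exact h2 (SimpleGraph.ConnectedComponent.exact hij)
             | exact h3 (SimpleGraph.ConnectedComponent.exact hij)
             | exact h4 (SimpleGraph.ConnectedComponent.exact hij)
             | exact h5 (SimpleGraph.ConnectedComponent.exact hij)
             | exact h6 (SimpleGraph.ConnectedComponent.exact hij)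
             | exact h1 (SimpleGraph.ConnectedComponent.exact hij.symm)
             | exact h2 (SimpleGraph.ConnectedComponent.exact hij.symm)
             | exact h3 (SimpleGraph.ConnectedComponent.exact hij.symm)
             | exact h4 (SimpleGraph.ConnectedComponent.exact hij.symm)
             | exact h5 (SimpleGraph.ConnectedComponent.exact hij.symm)
             | exact h6 (SimpleGraph.ConnectedComponent.exact hij.symm))
  have h4le : 4 ≤ Nat.card H.ConnectedComponent := by
    calc 4 = Nat.card (Fin 4) := by simp
    _ ≤ Nat.card H.ConnectedComponent := Nat.card_le_card_of_injective _ hinj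
  omega

lemma cut_laminar [Finite V] {T : SimpleGraph V} (hT : T.IsTree) (r : V) (e f : Sym2 V)
    {x : V} (hxe : ¬(T.deleteEdges {e}).Reachable r x)
    (hxf : ¬(T.deleteEdges {f}).Reachable r x) :
    (∀ v, ¬(T.deleteEdges {e}).Reachable r v → ¬(T.deleteEdges {f}).Reachable r v) ∨
    (∀ v, ¬(T.deleteEdges {f}).Reachable r v → ¬(T.deleteEdges {e}).Reachable r v) := by
  by_contra hcon
  push_neg at hcon
  obtain ⟨⟨y, hye, hyf⟩, ⟨z, hzf, hze⟩⟩ := hcon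
  have hmonoe : T.deleteEdges {e, f} ≤ T.deleteEdges {e} :=
    SimpleGraph.deleteEdges_anti (by simp)
  have hmonof : T.deleteEdges {e, f} ≤ T.deleteEdges {f} :=
    SimpleGraph.deleteEdges_anti (by simp [Set.subset_insert])
  have hcard : Nat.card (T.deleteEdges {e, f}).ConnectedComponent ≤ 3 := by
    have := card_cc_deleteEdges_le T hT.isConnected {e, f}
    have h2 : ({e, f} : Set (Sym2 V)).ncard ≤ 2 := by
      apply (Set.ncard_insert_le _ _).trans
      simp
    omega
  refine four_comps hcard (r := r) (x := x) (y := y) (z := z) ?_ ?_ ?_ ?_ ?_ ?_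
  · exact fun h => hxe (h.mono hmonoe)
  · exact fun h => hye (h.mono hmonoe)
  · exact fun h => hzf (h.mono hmonof)
  · exact fun h => hxf (hyf.trans (h.mono hmonof).symm)
  · exact fun h => hxe (hze.trans (h.mono hmonoe).symm)
  · exact fun h => hzf (hyf.trans (h.mono hmonof))

lemma three_comps {W : Type} [Finite W] {H : SimpleGraph W}
    (hcard : Nat.card H.ConnectedComponent ≤ 2) {r x y : W}
    (h1 : ¬H.Reachable r x) (h2 : ¬H.Reachable r y) : H.Reachable x y := by
  classical
  by_contra h3
  have hinj : Function.Injective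
      (![H.connectedComponentMk r, H.connectedComponentMk x,
         H.connectedComponentMk y] : Fin 3 → _) := by
    intro i j hij
    fin_cases i <;> fin_cases j <;>
      first
        | rfl
        | (exfalso; simp only [Matrix.cons_val_zero, Matrix.cons_val_one, Matrix.head_cons,
            Matrix.cons_val_two, Matrix.tail_cons] at hij
           first
             | exact h1 (SimpleGraph.ConnectedComponent.exact hij)
             | exact h2 (SimpleGraph.ConnectedComponent.exact hij)
             | exact h3 (SimpleGraph.ConnectedComponent.exact hij)
             | exact h1 (SimpleGraph.ConnectedComponent.exact hij.symm)
             | exact h2 (SimpleGraph.ConnectedComponent.exact hij.symm)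
             | exact h3 (SimpleGraph.ConnectedComponent.exact hij.symm))
  have h3le : 3 ≤ Nat.card H.ConnectedComponent := by
    calc 3 = Nat.card (Fin 3) := by simp
    _ ≤ Nat.card H.ConnectedComponent := Nat.card_le_card_of_injective _ hinj
  omega

section Label
open Classical in
/-- signature of an element w.r.t. a tuple of sets -/
noncomputable def sigF {β : Type} [Fintype β] {m : ℕ} (F : Fin m → Finset β) (x : β) :
    Colex (Finset (Fin m)) :=
  toColex (Finset.univ.filter (fun i => x ∈ F i))

open Classical in
noncomputable def sigSet {β : Type} [Fintype β] {m : ℕ} (F : Fin m → Finset β) :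
    Finset (Colex (Finset (Fin m))) :=
  Finset.univ.image (sigF F)

open Classical in
noncomputable def labelFn {β : Type} [Fintype β] {m : ℕ} (F : Fin m → Finset β) (x : β) : ℕ :=
  ((sigSet F).filter (· < sigF F x)).card

lemma labelFn_lt {β : Type} [Fintype β] {m : ℕ} (F : Fin m → Finset β) (x : β) :
    labelFn F x < (sigSet F).card := by
  classical
  apply Finset.card_lt_card
  rw [Finset.ssubset_iff_of_subset (Finset.filter_subset _ _)]
  refine ⟨sigF F x, ?_, ?_⟩
  · exact Finset.mem_image.mpr ⟨x, Finset.mem_univ x, rfl⟩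
  · intro h
    exact absurd (Finset.mem_filter.mp h).2 (lt_irrefl _)

lemma labelFn_inj {β : Type} [Fintype β] {m : ℕ} (F : Fin m → Finset β) (x y : β)
    (h : labelFn F x = labelFn F y) : sigF F x = sigF F y := by
  classical
  by_contra hne
  rcases lt_or_gt_of_ne hne with hlt | hlt
  · have : labelFn F x < labelFn F y := by
      apply Finset.card_lt_card
      rw [Finset.ssubset_iff_of_subset]
      · refine ⟨sigF F x, ?_, ?_⟩
        · exact Finset.mem_filter.mpr ⟨Finset.mem_image.mpr ⟨x, Finset.mem_univ x, rfl⟩, hlt⟩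
        · intro hmem
          exact absurd (Finset.mem_filter.mp hmem).2 (lt_irrefl _)
      · intro t ht
        rw [Finset.mem_filter] at ht ⊢
        exact ⟨ht.1, ht.2.trans hlt⟩
    omega
  · have : labelFn F y < labelFn F x := by
      apply Finset.card_lt_card
      rw [Finset.ssubset_iff_of_subset]
      · refine ⟨sigF F y, ?_, ?_⟩
        · exact Finset.mem_filter.mpr ⟨Finset.mem_image.mpr ⟨y, Finset.mem_univ y, rfl⟩, hlt⟩
        · intro hmem
          exact absurd (Finset.mem_filter.mp hmem).2 (lt_irrefl _)
      · intro t ht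
        rw [Finset.mem_filter] at ht ⊢
        exact ⟨ht.1, ht.2.trans hlt⟩
    omega

lemma sigF_eq_iff {β : Type} [Fintype β] {m : ℕ} (F : Fin m → Finset β) (x y : β) :
    sigF F x = sigF F y ↔ ∀ i, (x ∈ F i ↔ y ∈ F i) := by
  classical
  rw [sigF, sigF, toColex_inj]
  constructor
  · intro h i
    have := Finset.ext_iff.mp h i
    simpa using this
  · intro h
    ext i
    simpa using h i
end Label

section Main
variable {V : Type} [Fintype V]

/-- the far side of edge `e`, as seen from root `r` -/
def cutSet (T : SimpleGraph V) (r : V) (e : Sym2 V) : Set V :=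
  {v | ¬ (T.deleteEdges {e}).Reachable r v}

open Classical in
noncomputable def traceCut (T : SimpleGraph V) (X : Set V) [Fintype ↥X] (r : V)
    (e : Sym2 V) : Finset ↥X :=
  Finset.univ.filter fun x => (x : V) ∈ cutSet T r e

open Classical in
noncomputable def cutFam (T : SimpleGraph V) (X : Set V) [Fintype ↥X] (r : V) :
    Finset (Finset ↥X) :=
  Finset.univ.image (traceCut T X r)

lemma mem_traceCut {T : SimpleGraph V} {X : Set V} [Fintype ↥X] {r : V} {e : Sym2 V}
    {x : ↥X} : x ∈ traceCut T X r e ↔ ¬ (T.deleteEdges {e}).Reachable r ↑x := by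
  classical
  simp only [traceCut, cutSet, Finset.mem_filter, Finset.mem_univ, true_and, Set.mem_setOf_eq]

lemma traceCut_mem_cutFam {T : SimpleGraph V} {X : Set V} [Fintype ↥X] {r : V} (e : Sym2 V) :
    traceCut T X r e ∈ cutFam T X r := by
  classical
  exact Finset.mem_image.mpr ⟨e, Finset.mem_univ _, rfl⟩

lemma cutFam_card_le {T : SimpleGraph V} (hT : T.IsTree) {X : Set V} [Fintype ↥X]
    {r : V} (hr : r ∈ X) : (cutFam T X r).card ≤ 2 * X.ncard := by
  classical
  have hXcard : X.ncard = Fintype.card ↥X := by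
    rw [← Nat.card_coe_set_eq, Nat.card_eq_fintype_card]
  have hXpos : 1 ≤ Fintype.card ↥X := Fintype.card_pos_iff.mpr ⟨⟨r, hr⟩⟩
  set rX : ↥X := ⟨r, hr⟩ with hrX
  -- the family without the empty set is laminar on univ.erase rX
  have hsub : cutFam T X r ⊆ insert ∅ ((cutFam T X r).erase ∅) := by
    intro A hA
    by_cases h : A = ∅
    · simp [h]
    · exact Finset.mem_insert_of_mem (Finset.mem_erase.mpr ⟨h, hA⟩)
  have hlam : ∀ A ∈ (cutFam T X r).erase ∅, ∀ B ∈ (cutFam T X r).erase ∅,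
      A ⊆ B ∨ B ⊆ A ∨ Disjoint A B := by
    intro A hA B hB
    obtain ⟨e, _, rfl⟩ := Finset.mem_image.mp (Finset.mem_of_mem_erase hA)
    obtain ⟨f, _, rfl⟩ := Finset.mem_image.mp (Finset.mem_of_mem_erase hB)
    by_cases hd : Disjoint (traceCut T X r e) (traceCut T X r f)
    · exact Or.inr (Or.inr hd)
    · obtain ⟨x, hx⟩ := Finset.not_disjoint_iff.mp hd
      rcases cut_laminar hT r e f (mem_traceCut.mp hx.1) (mem_traceCut.mp hx.2) with h | h
      · refine Or.inl (fun y hy => ?_)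
        exact mem_traceCut.mpr (h ↑y (mem_traceCut.mp hy))
      · refine Or.inr (Or.inl (fun y hy => ?_))
        exact mem_traceCut.mpr (h ↑y (mem_traceCut.mp hy))
  have hU : ∀ A ∈ (cutFam T X r).erase ∅, A ⊆ Finset.univ.erase rX := by
    intro A hA x hx
    obtain ⟨e, _, rfl⟩ := Finset.mem_image.mp (Finset.mem_of_mem_erase hA)
    refine Finset.mem_erase.mpr ⟨?_, Finset.mem_univ x⟩
    intro hxr
    have := mem_traceCut.mp hx
    rw [hxr] at this
    exact this (SimpleGraph.Reachable.refl _)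
  have hne : ∀ A ∈ (cutFam T X r).erase ∅, A.Nonempty := by
    intro A hA
    exact Finset.nonempty_of_ne_empty (Finset.mem_erase.mp hA).1
  have hmain := laminar_card_le _ _ hU hne hlam
  have hUcard : (Finset.univ.erase rX).card = Fintype.card ↥X - 1 := by
    rw [Finset.card_erase_of_mem (Finset.mem_univ _), Finset.card_univ]
  have h1 := Finset.card_le_card hsub
  have h2 := Finset.card_insert_le (∅ : Finset ↥X) ((cutFam T X r).erase ∅)
  omega

lemma encode_exists {T : SimpleGraph V} (hT : T.IsTree)
    {X : Set V} [Fintype ↥X] {r : V} (hr : r ∈ X) {k : ℕ} (hk : 1 ≤ k)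
    (Q : Setoid ↥X) (R : Setoid V)
    (hS : (crossingEdges T R).ncard ≤ 2 * k - 2)
    (hproj : ∀ x y : ↥X, Q.r x y ↔ R.r ↑x ↑y) :
    ∃ (F : Fin (2*k-2) → Finset ↥X) (g : ℕ → Fin (2*k-1)),
      (∀ i, F i ∈ cutFam T X r) ∧ (∀ x, labelFn F x < 2*k-1) ∧
      (∀ x y : ↥X, Q.r x y ↔ g (labelFn F x) = g (labelFn F y)) := by
  classical
  set S := crossingEdges T R with hSdef
  have hSfin : S.Finite := Set.toFinite S
  -- K1 : reachability avoiding S implies R-relatedness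
  have K1 : ∀ a b : V, (T.deleteEdges S).Reachable a b → R.r a b := by
    intro a b ⟨w⟩
    induction w with
    | nil => exact R.iseqv.refl _
    | @cons u v w' hadj p ih =>
      have huv : R.r u v := by
        by_contra hR
        rw [SimpleGraph.deleteEdges_adj] at hadj
        exact hadj.2 ⟨(SimpleGraph.mem_edgeSet _).mpr hadj.1, u, v, rfl, hR⟩
      exact R.iseqv.trans huv ih
  -- the list of crossing edges
  set l : List (Sym2 V) := hSfin.toFinset.toList with hldef
  have hlen : l.length ≤ 2 * k - 2 := by
    rw [hldef, Finset.length_toList, ← Set.ncard_eq_toFinset_card _ hSfin]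
    exact hS
  have hlmem : ∀ e, e ∈ l ↔ e ∈ S := by
    intro e
    rw [hldef, Finset.mem_toList, Set.Finite.mem_toFinset]
  set σ : Fin (2*k-2) → Sym2 V := fun i => l.getD i s(r, r) with hσdef
  have hσ1 : ∀ e ∈ S, ∃ i : Fin (2*k-2), σ i = e := by
    intro e he
    obtain ⟨n, hn, hget⟩ := List.mem_iff_getElem.mp ((hlmem e).mpr he)
    refine ⟨⟨n, lt_of_lt_of_le hn hlen⟩, ?_⟩
    show l.getD n s(r,r) = e
    rw [List.getD_eq_getElem l _ hn]
    exact hget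
  have hσ2 : ∀ i, σ i ∈ S ∨ σ i = s(r, r) := by
    intro i
    by_cases hi : (i : ℕ) < l.length
    · left
      have : σ i = l[(i:ℕ)] := List.getD_eq_getElem l _ hi
      rw [this]
      exact (hlmem _).mp (List.getElem_mem hi)
    · right
      show l.getD (i:ℕ) s(r,r) = s(r,r)
      rw [List.getD_eq_default]
      omega
  -- junk edge has empty cut
  have hjunk : ∀ v, v ∈ cutSet T r s(r,r) → False := by
    intro v hv
    have hTeq : T.deleteEdges {s(r,r)} = T := by
      ext a b
      rw [SimpleGraph.deleteEdges_adj]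
      constructor
      · exact fun h => h.1
      · intro h
        refine ⟨h, ?_⟩
        intro hmem
        rw [Set.mem_singleton_iff, Sym2.eq_iff] at hmem
        rcases hmem with ⟨rfl, rfl⟩ | ⟨rfl, rfl⟩ <;> exact h.ne rfl
    rw [cutSet, Set.mem_setOf_eq, hTeq] at hv
    exact hv (hT.isConnected.preconnected r v)
  -- two sides for an edge in S
  have htwo : ∀ e, ∀ a b : V, a ∈ cutSet T r e → b ∈ cutSet T r e →
      (T.deleteEdges {e}).Reachable a b := by
    intro e a b ha hb
    have hc := card_cc_deleteEdges_le T hT.isConnected {e}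
    rw [Set.ncard_singleton] at hc
    exact three_comps hc ha hb
  -- same component implies same side
  have hside : ∀ v w : V, (T.deleteEdges S).Reachable v w →
      ∀ e ∈ S, (v ∈ cutSet T r e ↔ w ∈ cutSet T r e) := by
    intro v w hvw e he
    have hvw' : (T.deleteEdges {e}).Reachable v w :=
      hvw.mono (SimpleGraph.deleteEdges_anti (Set.singleton_subset_iff.mpr he))
    constructor
    · intro hv hwreach
      exact hv (hwreach.trans hvw'.symm)
    · intro hw hvreach
      exact hw (hvreach.trans hvw')
  set F : Fin (2*k-2) → Finset ↥X := fun i => traceCut T X r (σ i) with hFdef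
  -- K2 : signature equality iff same component
  have K2 : ∀ x y : ↥X, (∀ i, (x ∈ F i ↔ y ∈ F i)) ↔
      (T.deleteEdges S).Reachable ↑x ↑y := by
    intro x y
    constructor
    · intro h
      apply reachable_deleteEdges_of_forall hT
      intro e he
      obtain ⟨i, rfl⟩ := hσ1 e he
      have hFi : (x ∈ F i ↔ y ∈ F i) := h i
      rw [hFdef] at hFi
      simp only [mem_traceCut] at hFi
      by_cases hrx : (T.deleteEdges {σ i}).Reachable r ↑x
      · have hry : (T.deleteEdges {σ i}).Reachable r ↑y := by
          by_contra hry
          exact (hFi.mpr hry) hrx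
        exact hrx.symm.trans hry
      · have hry : ¬ (T.deleteEdges {σ i}).Reachable r ↑y := hFi.mp hrx
        exact htwo (σ i) ↑x ↑y hrx hry
    · intro h i
      rcases hσ2 i with hi | hi
      · rw [hFdef]
        simp only [mem_traceCut]
        have := hside ↑x ↑y h (σ i) hi
        rw [cutSet] at this
        simpa using this
      · rw [hFdef]
        simp only [mem_traceCut]
        rw [hi]
        constructor <;> intro h' <;> exact (hjunk _ h').elim
  -- signatures factor through connected components
  haveI : Fintype (T.deleteEdges S).ConnectedComponent := Fintype.ofFinite _
  have hcc : Nat.card (T.deleteEdges S).ConnectedComponent ≤ 2*k-1 := by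
    have h1 := card_cc_deleteEdges_le T hT.isConnected S
    omega
  have hsig_card : (sigSet F).card ≤ 2*k-1 := by
    set τ : (T.deleteEdges S).ConnectedComponent → Colex (Finset (Fin (2*k-2))) :=
      SimpleGraph.ConnectedComponent.lift
        (fun v => toColex (Finset.univ.filter (fun i => v ∈ cutSet T r (σ i))))
        (by
          intro v w p hp
          have hreach : (T.deleteEdges S).Reachable v w := ⟨p⟩
          refine congrArg toColex (Finset.filter_congr ?_)
          intro i _
          rcases hσ2 i with hi | hi
          · exact hside v w hreach (σ i) hi
          · rw [hi]
            constructor <;> intro h' <;> exact (hjunk _ h').elim) with hτdef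
    have hfactor : ∀ x : ↥X, sigF F x = τ ((T.deleteEdges S).connectedComponentMk ↑x) := by
      intro x
      rw [hτdef, SimpleGraph.ConnectedComponent.lift_mk]
      unfold sigF
      refine congrArg toColex ?_
      ext i
      simp only [Finset.mem_filter, Finset.mem_univ, true_and, hFdef, mem_traceCut,
        cutSet, Set.mem_setOf_eq]
    have hsub : sigSet F ⊆ Finset.univ.image τ := by
      intro t ht
      obtain ⟨x, _, rfl⟩ := Finset.mem_image.mp ht
      exact Finset.mem_image.mpr ⟨_, Finset.mem_univ _, (hfactor x).symm⟩
    calc (sigSet F).card ≤ (Finset.univ.image τ).card := Finset.card_le_card hsub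
      _ ≤ (Finset.univ : Finset (T.deleteEdges S).ConnectedComponent).card :=
          Finset.card_image_le
      _ = Nat.card (T.deleteEdges S).ConnectedComponent := by
          rw [Finset.card_univ, Nat.card_eq_fintype_card]
      _ ≤ 2*k-1 := hcc
  have hlab_lt : ∀ x : ↥X, labelFn F x < 2*k-1 :=
    fun x => lt_of_lt_of_le (labelFn_lt F x) hsig_card
  -- same label implies Q-related
  have K7 : ∀ x y : ↥X, labelFn F x = labelFn F y → Q.r x y := by
    intro x y h
    have hsig := labelFn_inj F x y h
    rw [sigF_eq_iff] at hsig
    have hreach := (K2 x y).mp hsig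
    exact (hproj x y).mpr (K1 _ _ hreach)
  -- the coarsening function
  have hpos : 0 < 2*k-1 := by omega
  set g : ℕ → Fin (2*k-1) := fun j =>
    if h : ∃ x : ↥X, labelFn F x = j then
      ⟨sInf {m | ∃ y : ↥X, Q.r y h.choose ∧ labelFn F y = m}, by
        have hmem : sInf {m | ∃ y : ↥X, Q.r y h.choose ∧ labelFn F y = m} ∈
            {m | ∃ y : ↥X, Q.r y h.choose ∧ labelFn F y = m} :=
          Nat.sInf_mem ⟨labelFn F h.choose, h.choose, Q.iseqv.refl _, rfl⟩
        obtain ⟨y, _, hy⟩ := hmem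
        rw [← hy]
        exact hlab_lt y⟩
    else ⟨0, hpos⟩ with hgdef
  refine ⟨F, g, fun i => traceCut_mem_cutFam _, hlab_lt, ?_⟩
  intro x y
  have hwx : ∀ (h : ∃ z : ↥X, labelFn F z = labelFn F x), Q.r h.choose x :=
    fun h => K7 _ _ h.choose_spec
  have hwy : ∀ (h : ∃ z : ↥X, labelFn F z = labelFn F y), Q.r h.choose y :=
    fun h => K7 _ _ h.choose_spec
  have hex : ∃ z : ↥X, labelFn F z = labelFn F x := ⟨x, rfl⟩
  have hey : ∃ z : ↥X, labelFn F z = labelFn F y := ⟨y, rfl⟩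
  rw [hgdef]
  simp only [dif_pos hex, dif_pos hey]
  constructor
  · intro hQ
    have hsets : {m | ∃ z : ↥X, Q.r z hex.choose ∧ labelFn F z = m} =
        {m | ∃ z : ↥X, Q.r z hey.choose ∧ labelFn F z = m} := by
      ext m
      constructor
      · rintro ⟨z, hz, rfl⟩
        exact ⟨z, Q.iseqv.trans hz (Q.iseqv.trans (hwx hex)
          (Q.iseqv.trans hQ (Q.iseqv.symm (hwy hey)))), rfl⟩
      · rintro ⟨z, hz, rfl⟩
        exact ⟨z, Q.iseqv.trans hz (Q.iseqv.trans (hwy hey)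
          (Q.iseqv.trans (Q.iseqv.symm hQ) (Q.iseqv.symm (hwx hex)))), rfl⟩
    exact Fin.ext (congrArg sInf hsets)
  · intro hg
    have hvals := Fin.val_eq_val _ _ |>.mpr hg
    simp only at hvals
    have hmx : sInf {m | ∃ z : ↥X, Q.r z hex.choose ∧ labelFn F z = m} ∈
        {m | ∃ z : ↥X, Q.r z hex.choose ∧ labelFn F z = m} :=
      Nat.sInf_mem ⟨labelFn F hex.choose, hex.choose, Q.iseqv.refl _, rfl⟩
    have hmy : sInf {m | ∃ z : ↥X, Q.r z hey.choose ∧ labelFn F z = m} ∈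
        {m | ∃ z : ↥X, Q.r z hey.choose ∧ labelFn F z = m} :=
      Nat.sInf_mem ⟨labelFn F hey.choose, hey.choose, Q.iseqv.refl _, rfl⟩
    obtain ⟨zx, hzx, hlx⟩ := hmx
    obtain ⟨zy, hzy, hly⟩ := hmy
    have hzz : Q.r zx zy := K7 _ _ (by rw [hlx, hly, hvals])
    exact Q.iseqv.trans (Q.iseqv.symm (Q.iseqv.trans hzx (hwx hex)))
      (Q.iseqv.trans hzz (Q.iseqv.trans hzy (hwy hey)))

end Main

theorem stmt_7 {V : Type} [Fintype V] (T : SimpleGraph V) (hT : T.IsTree)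
    (X : Set V) (hX : X.Nonempty) (k : ℕ) (hk : 1 ≤ k) :
    ({Q : Setoid ↥X | ∃ R : Setoid V, (crossingEdges T R).ncard ≤ 2 * k - 2 ∧
        ∀ x y : ↥X, (Q.r x y ↔ R.r (x : V) (y : V))}).ncard
      ≤ (4 * k * X.ncard) ^ (2 * k) := by
  classical
  haveI : Fintype ↥X := Set.Finite.fintype (Set.toFinite X)
  obtain ⟨r, hr⟩ := hX
  set 𝒬 := {Q : Setoid ↥X | ∃ R : Setoid V, (crossingEdges T R).ncard ≤ 2 * k - 2 ∧
      ∀ x y : ↥X, (Q.r x y ↔ R.r (x : V) (y : V))} with h𝒬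
  set Etype := ((Fin (2*k-2) → {A : Finset ↥X // A ∈ cutFam T X r}) × (Fin (2*k-1) → Fin (2*k-1))) with hEtype
  set E : Setoid ↥X → Etype := fun Q =>
    if h : ∃ R : Setoid V, (crossingEdges T R).ncard ≤ 2 * k - 2 ∧
        ∀ x y : ↥X, (Q.r x y ↔ R.r (x : V) (y : V)) then
      (fun i => ⟨(encode_exists hT hr hk Q h.choose h.choose_spec.1 h.choose_spec.2).choose i,
        (encode_exists hT hr hk Q h.choose h.choose_spec.1
          h.choose_spec.2).choose_spec.choose_spec.1 i⟩,
       fun j => (encode_exists hT hr hk Q h.choose h.choose_spec.1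
          h.choose_spec.2).choose_spec.choose (j : ℕ))
    else (fun _ => ⟨traceCut T X r s(r,r), traceCut_mem_cutFam _⟩, fun j => j) with hE
  have hinj : Set.InjOn E 𝒬 := by
    intro Q1 hQ1 Q2 hQ2 heq
    rw [h𝒬, Set.mem_setOf_eq] at hQ1 hQ2
    rw [hE] at heq
    simp only [dif_pos hQ1, dif_pos hQ2] at heq
    set spec1 := encode_exists hT hr hk Q1 hQ1.choose hQ1.choose_spec.1 hQ1.choose_spec.2
      with hspec1
    set spec2 := encode_exists hT hr hk Q2 hQ2.choose hQ2.choose_spec.1 hQ2.choose_spec.2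
      with hspec2
    obtain ⟨hmem1, hlt1, hdec1⟩ := spec1.choose_spec.choose_spec
    obtain ⟨hmem2, hlt2, hdec2⟩ := spec2.choose_spec.choose_spec
    have h1 := congrArg Prod.fst heq
    have h2 := congrArg Prod.snd heq
    simp only at h1 h2
    have hF : spec1.choose = spec2.choose := by
      funext i
      have := congrFun h1 i
      exact Subtype.ext_iff.mp this
    have hlabeq : ∀ x : ↥X, labelFn spec1.choose x = labelFn spec2.choose x :=
      fun x => congrArg (fun F => labelFn F x) hF
    have hgeq : ∀ n, n < 2*k-1 →
        spec1.choose_spec.choose n = spec2.choose_spec.choose n := by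
      intro n hn
      have := congrFun h2 (⟨n, hn⟩ : Fin (2*k-1))
      simpa using this
    apply Setoid.ext
    intro x y
    rw [hdec1 x y, hdec2 x y, hgeq _ (hlt1 x), hgeq _ (hlt1 y), hlabeq x, hlabeq y]
  have hcount : 𝒬.ncard ≤ Nat.card Etype := by
    rw [← Set.ncard_image_of_injOn hinj]
    calc (E '' 𝒬).ncard ≤ (Set.univ : Set Etype).ncard :=
          Set.ncard_le_ncard (Set.subset_univ _) Set.finite_univ
      _ = Nat.card Etype := Set.ncard_univ _

  have hcard_Etype : Nat.card Etype = (cutFam T X r).card ^ (2*k-2) * (2*k-1) ^ (2*k-1) := by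
    rw [hEtype, Nat.card_prod, Nat.card_fun, Nat.card_fun]
    simp only [Nat.card_eq_fintype_card, Fintype.card_coe, Fintype.card_fin]
  have hfam : (cutFam T X r).card ≤ 2 * X.ncard := cutFam_card_le hT hr
  have hXpos : 1 ≤ X.ncard := by
    have : X.Nonempty := ⟨r, hr⟩
    have := Set.ncard_pos (Set.toFinite X) |>.mpr this
    omega
  calc 𝒬.ncard ≤ Nat.card Etype := hcount
    _ = (cutFam T X r).card ^ (2*k-2) * (2*k-1) ^ (2*k-1) := hcard_Etype
    _ ≤ (2 * X.ncard) ^ (2*k-2) * (2*k-1) ^ (2*k-1) := by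
        exact Nat.mul_le_mul_right _ (Nat.pow_le_pow_left hfam _)
    _ ≤ (2 * X.ncard) ^ (2*k) * (2*k) ^ (2*k) := by
        apply Nat.mul_le_mul
        · apply Nat.pow_le_pow_right
          · omega
          · omega
        · calc (2*k-1) ^ (2*k-1) ≤ (2*k) ^ (2*k-1) := Nat.pow_le_pow_left (by omega) _
            _ ≤ (2*k) ^ (2*k) := Nat.pow_le_pow_right (by omega) (by omega)
    _ = (4 * k * X.ncard) ^ (2*k) := by
        rw [← Nat.mul_pow]
        ring_nf
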